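/- arXiv:2105.02861 — 2 statements merged into one kernel-verified Lean document; each statement's English description precedes it below -/
import Mathlib

section
/- Under the stated cell-problem hypotheses, the effective magnetic permeability matrix is uniformly positive definite: for every ζ ∈ ℝ^d, μ^eff ζ · ζ ≥ Λ⁻¹ |ζ|². -/
open MeasureTheory Finset
open scoped RealInnerProductSpace

lemma effperm_aux_measSet (d : ℕ) :
    MeasurableSet {y : EuclideanSpace ℝ (Fin d) | ∀ i, y i ∈ Set.Ioo (0:ℝ) 1} := by
  have : {y : EuclideanSpace ℝ (Fin d) | ∀ i, y i ∈ Set.Ioo (0:ℝ) 1}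
      = ⋂ i, (fun y : EuclideanSpace ℝ (Fin d) => y i) ⁻¹' (Set.Ioo (0:ℝ) 1) := by
    ext y; simp
  rw [this]
  exact MeasurableSet.iInter fun i =>
    ((EuclideanSpace.proj i : EuclideanSpace ℝ (Fin d) →L[ℝ] ℝ).continuous.measurable)
      measurableSet_Ioo

lemma effperm_aux_volume (d : ℕ) :
    volume {y : EuclideanSpace ℝ (Fin d) | ∀ i, y i ∈ Set.Ioo (0:ℝ) 1} = 1 := by
  have hpre : {y : EuclideanSpace ℝ (Fin d) | ∀ i, y i ∈ Set.Ioo (0:ℝ) 1}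
      = (MeasurableEquiv.toLp 2 (Fin d → ℝ)).symm ⁻¹' (Set.univ.pi fun _ => Set.Ioo (0:ℝ) 1) := by
    ext y; simp [Set.mem_pi]
  rw [hpre, (EuclideanSpace.volume_preserving_symm_measurableEquiv_toLp (Fin d)).measure_preimage
    ((MeasurableSet.univ_pi fun _ => measurableSet_Ioo).nullMeasurableSet)]
  simp [volume_pi_pi]

lemma effperm_aux_subset (d : ℕ) (hd1 : 1 ≤ (d:ℝ)) :
    {y : EuclideanSpace ℝ (Fin d) | ∀ i, y i ∈ Set.Ioo (0:ℝ) 1}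
      ⊆ Metric.closedBall (0 : EuclideanSpace ℝ (Fin d)) d := by
  intro y hy
  simp only [Metric.mem_closedBall, dist_zero_right]
  have h1 : ‖y‖ ^ 2 ≤ (d : ℝ) := by
    rw [EuclideanSpace.norm_eq, Real.sq_sqrt (by positivity)]
    calc ∑ i, ‖y i‖ ^ 2 ≤ ∑ _i : Fin d, (1:ℝ) := by
          refine Finset.sum_le_sum fun i _ => ?_
          have := hy i
          rw [Real.norm_eq_abs, abs_of_pos this.1]
          nlinarith [this.1, this.2]
      _ = d := by simp
  nlinarith [norm_nonneg y]

lemma effperm_aux_integrableOn (d : ℕ) (hd1 : 1 ≤ (d:ℝ))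
    (F : EuclideanSpace ℝ (Fin d) → ℝ) (hF : Continuous F) :
    IntegrableOn F {y : EuclideanSpace ℝ (Fin d) | ∀ i, y i ∈ Set.Ioo (0:ℝ) 1} volume :=
  (hF.continuousOn.integrableOn_compact
    (isCompact_closedBall (0 : EuclideanSpace ℝ (Fin d)) d)).mono_set
    (effperm_aux_subset d hd1)

lemma effperm_aux_jensen (d : ℕ) (hd1 : 1 ≤ (d:ℝ))
    (F : EuclideanSpace ℝ (Fin d) → ℝ) (hF : Continuous F) :
    (∫ y in {y : EuclideanSpace ℝ (Fin d) | ∀ i, y i ∈ Set.Ioo (0:ℝ) 1}, F y) ^ 2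
      ≤ ∫ y in {y : EuclideanSpace ℝ (Fin d) | ∀ i, y i ∈ Set.Ioo (0:ℝ) 1}, (F y) ^ 2 := by
  set Y := {y : EuclideanSpace ℝ (Fin d) | ∀ i, y i ∈ Set.Ioo (0:ℝ) 1} with hYdef
  have hvol : volume Y = 1 := effperm_aux_volume d
  have hmeas : MeasurableSet Y := effperm_aux_measSet d
  set c : ℝ := ∫ y in Y, F y with hc
  have hIF : IntegrableOn F Y volume := effperm_aux_integrableOn d hd1 F hF
  have hIF2 : IntegrableOn (fun y => (F y)^2) Y volume :=
    effperm_aux_integrableOn d hd1 _ (hF.pow 2)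
  have hfinvol : volume Y < ⊤ := by rw [hvol]; exact ENNReal.one_lt_top
  have hIc : IntegrableOn (fun _ : EuclideanSpace ℝ (Fin d) => c^2) Y volume :=
    integrableOn_const hfinvol.ne
  have hIsub : IntegrableOn (fun y => (F y)^2 - (2*c) * F y) Y volume := by
    have := hIF2.sub (hIF.const_mul (2*c))
    exact this
  have h0 : 0 ≤ ∫ y in Y, (F y - c)^2 :=
    setIntegral_nonneg hmeas fun y _ => sq_nonneg _
  have hexp : ∫ y in Y, (F y - c)^2
      = (∫ y in Y, (F y)^2) - 2 * c * c + c^2 * (volume Y).toReal := by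
    have heq : ∀ y, (F y - c)^2 = ((F y)^2 - (2*c) * F y) + c^2 := by intro y; ring
    simp_rw [heq]
    rw [integral_add hIsub hIc]
    rw [integral_sub hIF2 (hIF.const_mul (2*c))]
    rw [integral_const_mul, setIntegral_const]
    simp only [smul_eq_mul, mul_one, ← hc, measureReal_def]
    ring
  rw [hexp, hvol] at h0
  simp only [ENNReal.toReal_one, mul_one] at h0
  nlinarith [h0]

lemma effperm_aux_grad_cont (d : ℕ) (f : EuclideanSpace ℝ (Fin d) → ℝ) (hf : ContDiff ℝ 1 f) :
    Continuous (gradient f) := by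
  unfold gradient
  exact (InnerProductSpace.toDual ℝ (EuclideanSpace ℝ (Fin d))).symm.continuous.comp
    (hf.continuous_fderiv one_ne_zero)

lemma effperm_aux_grad_comp (d : ℕ) (f : EuclideanSpace ℝ (Fin d) → ℝ)
    (y : EuclideanSpace ℝ (Fin d)) (i : Fin d) :
    gradient f y i = fderiv ℝ f y (EuclideanSpace.single i 1) := by
  have h1 : ⟪EuclideanSpace.single i (1:ℝ), gradient f y⟫ = gradient f y i := by
    rw [EuclideanSpace.inner_single_left]; simp
  rw [← h1, real_inner_comm]
  unfold gradient
  exact InnerProductSpace.toDual_symm_apply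

lemma effperm_aux_fderiv_int (n : ℕ) (f : EuclideanSpace ℝ (Fin (n+1)) → ℝ)
    (hf : ContDiff ℝ 1 f)
    (hper : ∀ y l, f (y + EuclideanSpace.single l (1:ℝ)) = f y)
    (i : Fin (n+1)) :
    ∫ y in {y : EuclideanSpace ℝ (Fin (n+1)) | ∀ j, y j ∈ Set.Ioo (0:ℝ) 1},
      fderiv ℝ f y (EuclideanSpace.single i 1) = 0 := by
  set g : EuclideanSpace ℝ (Fin (n+1)) → ℝ := fun y => fderiv ℝ f y (EuclideanSpace.single i 1)
    with hg
  have hgc : Continuous g := by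
    exact (ContinuousLinearMap.apply ℝ ℝ (EuclideanSpace.single i 1)).continuous.comp
      (hf.continuous_fderiv one_ne_zero)
  set e := (MeasurableEquiv.toLp 2 (Fin (n+1) → ℝ)).symm with he
  set S : Set (Fin (n+1) → ℝ) := Set.univ.pi (fun _ => Set.Ioo (0:ℝ) 1) with hS
  have hpre : {y : EuclideanSpace ℝ (Fin (n+1)) | ∀ j, y j ∈ Set.Ioo (0:ℝ) 1} = e ⁻¹' S := by
    ext y; simp [hS, e, Set.mem_pi]
  have h1 : ∫ y in {y : EuclideanSpace ℝ (Fin (n+1)) | ∀ j, y j ∈ Set.Ioo (0:ℝ) 1}, g y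
      = ∫ x in S, g (e.symm x) := by
    rw [hpre]
    have := (EuclideanSpace.volume_preserving_symm_measurableEquiv_toLp (Fin (n+1))).setIntegral_preimage_emb
      (e.measurableEmbedding) (fun x => g (e.symm x)) S
    exact this
  rw [h1]
  -- peel off coordinate i
  set E := MeasurableEquiv.piFinSuccAbove (fun _ : Fin (n+1) => ℝ) i with hE
  have h2 : ∫ x in S, g (e.symm x)
      = ∫ p in (Set.Ioo (0:ℝ) 1) ×ˢ (Set.univ.pi fun _ : Fin n => Set.Ioo (0:ℝ) 1),
          g (e.symm (Fin.insertNth i p.1 p.2)) := by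
    have hmp := (MeasureTheory.volume_preserving_piFinSuccAbove (fun _ : Fin (n+1) => ℝ) i).symm
    have := hmp.setIntegral_preimage_emb E.symm.measurableEmbedding
      (fun x => g (e.symm x)) S
    rw [← this]
    have hset : E.symm ⁻¹' S
        = (Set.Ioo (0:ℝ) 1) ×ˢ (Set.univ.pi fun _ : Fin n => Set.Ioo (0:ℝ) 1) := by
      ext p
      have hEs : E.symm p = i.insertNth p.1 p.2 := rfl
      simp only [Set.mem_preimage, hS, Set.mem_pi, Set.mem_univ, forall_true_left,
        Set.mem_prod, hEs]
      rw [Fin.forall_iff_succAbove i]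
      simp [Fin.insertNth_apply_same, Fin.insertNth_apply_succAbove]
    rw [hset]
    rfl
  rw [h2]
  have hesc : Continuous (⇑e.symm) := by
    rw [he, MeasurableEquiv.symm_symm, MeasurableEquiv.coe_toLp]
    exact (PiLp.continuousLinearEquiv 2 ℝ (fun _ : Fin (n+1) => ℝ)).symm.continuous
  have hins : Continuous fun p : ℝ × (Fin n → ℝ) => (Fin.insertNth (α := fun _ => ℝ) i p.1 p.2) := by
    rw [continuous_pi_iff]; intro j
    rcases eq_or_ne j i with rfl | hj
    · simp only [Fin.insertNth_apply_same]; exact continuous_fst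
    · obtain ⟨k, rfl⟩ := Fin.exists_succAbove_eq hj
      simp only [Fin.insertNth_apply_succAbove]
      exact (continuous_apply k).comp continuous_snd
  have hcont : Continuous fun p : ℝ × (Fin n → ℝ) =>
      g (e.symm (Fin.insertNth i p.1 p.2)) := hgc.comp (hesc.comp hins)
  have hIntg : IntegrableOn (fun p : ℝ × (Fin n → ℝ) => g (e.symm (Fin.insertNth i p.1 p.2)))
      ((Set.Ioo (0:ℝ) 1) ×ˢ (Set.univ.pi fun _ : Fin n => Set.Ioo (0:ℝ) 1)) volume := by
    have hK : IsCompact ((Set.Icc (0:ℝ) 1) ×ˢ (Set.Icc (0 : Fin n → ℝ) 1)) :=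
      isCompact_Icc.prod isCompact_Icc
    refine (hcont.continuousOn.integrableOn_compact hK).mono_set ?_
    rintro ⟨t, z⟩ ⟨ht, hz⟩
    refine ⟨⟨ht.1.le, ht.2.le⟩, ?_⟩
    constructor <;> intro j <;> have := hz j (Set.mem_univ j) <;>
      simp only [Pi.le_def, Pi.zero_apply, Pi.one_apply] at * <;>
      [exact (this.1.le); exact (this.2.le)]
  have hfin := Measure.volume_eq_prod (α := ℝ) (β := Fin n → ℝ)
  rw [hfin, ← Measure.prod_restrict]
  rw [MeasureTheory.integral_prod_symm]
  · have key : ∀ z : Fin n → ℝ,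
        ∫ t in Set.Ioo (0:ℝ) 1, g (e.symm (Fin.insertNth i t z)) = 0 := by
      intro z
      set c : EuclideanSpace ℝ (Fin (n+1)) := e.symm (Fin.insertNth i 0 z) with hc
      set u : EuclideanSpace ℝ (Fin (n+1)) := EuclideanSpace.single i (1:ℝ) with hu
      have hline : ∀ t : ℝ, e.symm (Fin.insertNth i t z) = c + t • u := by
        intro t
        ext j
        have hlhs : e.symm (Fin.insertNth i t z) j = Fin.insertNth (α := fun _ => ℝ) i t z j := rfl
        have hcj : c j = Fin.insertNth (α := fun _ => ℝ) i (0:ℝ) z j := rfl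
        have hrhs : (c + t • u) j = c j + t * u j := rfl
        rw [hlhs, hrhs, hcj]
        rcases eq_or_ne j i with rfl | hj
        · simp [hu, Fin.insertNth_apply_same, EuclideanSpace.single_apply]
        · obtain ⟨k, rfl⟩ := Fin.exists_succAbove_eq hj
          simp [hu, Fin.insertNth_apply_succAbove, EuclideanSpace.single_apply,
            (Fin.succAbove_ne i k)]
      have hd : ∀ t : ℝ, HasDerivAt (fun s : ℝ => f (c + s • u)) (g (c + t • u)) t := by
        intro t
        have h1 : HasDerivAt (fun s : ℝ => c + s • u) u t := by
          simpa using ((hasDerivAt_id t).smul_const u).const_add c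
        have h2 := ((hf.differentiable one_ne_zero) (c + t • u)).hasFDerivAt
        exact h2.comp_hasDerivAt t h1
      have hcont1 : Continuous fun t : ℝ => g (c + t • u) :=
        hgc.comp (continuous_const.add (continuous_id.smul continuous_const))
      calc ∫ t in Set.Ioo (0:ℝ) 1, g (e.symm (Fin.insertNth i t z))
          = ∫ t in Set.Ioo (0:ℝ) 1, g (c + t • u) := by simp_rw [hline]
        _ = ∫ t in Set.Ioc (0:ℝ) 1, g (c + t • u) :=
            (MeasureTheory.integral_Ioc_eq_integral_Ioo).symm
        _ = ∫ t in (0:ℝ)..1, g (c + t • u) :=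
            (intervalIntegral.integral_of_le zero_le_one).symm
        _ = f (c + (1:ℝ) • u) - f (c + (0:ℝ) • u) :=
            intervalIntegral.integral_eq_sub_of_hasDerivAt (fun t _ => hd t)
              (hcont1.intervalIntegrable 0 1)
        _ = 0 := by
            simp only [one_smul, zero_smul, add_zero]
            rw [hu, hper c i, sub_self]
    simp only [key, integral_zero]
  · rwa [Measure.prod_restrict, ← hfin]


/-- Under the cell-problem hypotheses, the effective
magnetic permeability matrix is uniformly positive definite:
`μ^eff ζ · ζ ≥ Λ⁻¹ |ζ|²` for every `ζ ∈ ℝ^d`. -/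
theorem effective_permeability_uniformly_positive_definite
    (d : ℕ) (hd : d = 2 ∨ d = 3)
    (Y : Set (EuclideanSpace ℝ (Fin d)))
    (hY : Y = {y : EuclideanSpace ℝ (Fin d) | ∀ i, y i ∈ Set.Ioo (0 : ℝ) 1})
    (Λ : ℝ) (hΛ : 0 < Λ)
    (μ : EuclideanSpace ℝ (Fin d) → ℝ) (hμmeas : Measurable μ)
    (hμper : ∀ (y : EuclideanSpace ℝ (Fin d)) (k : Fin d),
      μ (y + EuclideanSpace.single k 1) = μ y)
    (hμbound : ∀ y, Λ⁻¹ ≤ μ y ∧ μ y ≤ Λ)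
    (ω : Fin d → EuclideanSpace ℝ (Fin d) → ℝ)
    (hωC1 : ∀ k, ContDiff ℝ 1 (ω k))
    (hωper : ∀ (k : Fin d) (y : EuclideanSpace ℝ (Fin d)) (l : Fin d),
      ω k (y + EuclideanSpace.single l 1) = ω k y)
    (hcell : ∀ j k : Fin d,
      ∫ y in Y, μ y *
        ⟪EuclideanSpace.single j (1 : ℝ) + gradient (ω j) y, gradient (ω k) y⟫ = 0)
    (μeff : Fin d → Fin d → ℝ)
    (hμeff : ∀ j k : Fin d, μeff j k =
      ∫ y in Y, μ y *
        ⟪EuclideanSpace.single k (1 : ℝ) + gradient (ω k) y,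
          EuclideanSpace.single j (1 : ℝ)⟫) :
    ∀ ζ : EuclideanSpace ℝ (Fin d),
      Λ⁻¹ * ‖ζ‖ ^ 2 ≤ ∑ j, ∑ k, μeff j k * ζ j * ζ k := by
  intro ζ
  have hd1 : 1 ≤ (d:ℝ) := by rcases hd with rfl | rfl <;> norm_num
  -- notation
  set w : Fin d → EuclideanSpace ℝ (Fin d) → EuclideanSpace ℝ (Fin d) :=
    fun k y => EuclideanSpace.single k 1 + gradient (ω k) y with hw
  have hwc : ∀ k, Continuous (w k) := fun k =>
    continuous_const.add (effperm_aux_grad_cont d (ω k) (hωC1 k))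
  set v : EuclideanSpace ℝ (Fin d) → EuclideanSpace ℝ (Fin d) :=
    fun y => ∑ k, ζ k • w k y with hv
  have hvc : Continuous v := by
    apply continuous_finset_sum
    exact fun k _ => (hwc k).const_smul (ζ k)
  have hmeas : MeasurableSet Y := hY ▸ effperm_aux_measSet d
  have hvol : volume Y = 1 := hY ▸ effperm_aux_volume d
  have hInt : ∀ F : EuclideanSpace ℝ (Fin d) → ℝ, Continuous F → IntegrableOn F Y volume :=
    fun F hF => hY ▸ effperm_aux_integrableOn d hd1 F hF
  have hμabs : ∀ y, |μ y| ≤ Λ := by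
    intro y
    have h := hμbound y
    have : 0 < μ y := lt_of_lt_of_le (inv_pos.2 hΛ) h.1
    rw [abs_of_pos this]; exact h.2
  have hIntmul : ∀ F : EuclideanSpace ℝ (Fin d) → ℝ, Continuous F →
      IntegrableOn (fun y => μ y * F y) Y volume := by
    intro F hF
    refine Integrable.mono' ((hInt (fun y => Λ * |F y|)
      (continuous_const.mul hF.abs))) ?_ (ae_of_all _ fun y => ?_)
    · exact ((hμmeas.mul hF.measurable).aestronglyMeasurable).restrict
    · rw [Real.norm_eq_abs, abs_mul]
      exact mul_le_mul_of_nonneg_right (hμabs y) (abs_nonneg _)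
  -- Step A : μeff j k = ∫ μ ⟪w k, w j⟫
  have hwic : ∀ k j, Continuous fun y => ⟪w k y, w j y⟫ := fun k j => (hwc k).inner (hwc j)
  have hA : ∀ j k, μeff j k = ∫ y in Y, μ y * ⟪w k y, w j y⟫ := by
    intro j k
    have hI1 : IntegrableOn (fun y => μ y * ⟪w k y, EuclideanSpace.single j (1:ℝ)⟫) Y volume :=
      hIntmul _ ((hwc k).inner continuous_const)
    have hI2 : IntegrableOn (fun y => μ y * ⟪w k y, gradient (ω j) y⟫) Y volume :=
      hIntmul _ ((hwc k).inner (effperm_aux_grad_cont _ (ω j) (hωC1 j)))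
    have hsplit : ∀ y, μ y * ⟪w k y, w j y⟫
        = μ y * ⟪w k y, EuclideanSpace.single j (1:ℝ)⟫
          + μ y * ⟪w k y, gradient (ω j) y⟫ := by
      intro y
      have : w j y = EuclideanSpace.single j (1:ℝ) + gradient (ω j) y := rfl
      rw [this, inner_add_right, mul_add]
    have hcell' : ∫ y in Y, μ y * ⟪w k y, gradient (ω j) y⟫ = 0 := by
      have := hcell k j
      simpa [hw] using this
    rw [hμeff j k]
    symm
    calc ∫ y in Y, μ y * ⟪w k y, w j y⟫
        = ∫ y in Y, (μ y * ⟪w k y, EuclideanSpace.single j (1:ℝ)⟫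
            + μ y * ⟪w k y, gradient (ω j) y⟫) := by simp_rw [hsplit]
      _ = (∫ y in Y, μ y * ⟪w k y, EuclideanSpace.single j (1:ℝ)⟫)
            + ∫ y in Y, μ y * ⟪w k y, gradient (ω j) y⟫ := integral_add hI1 hI2
      _ = ∫ y in Y, μ y * ⟪w k y, EuclideanSpace.single j (1:ℝ)⟫ := by
            rw [hcell', add_zero]
      _ = ∫ y in Y, μ y * ⟪EuclideanSpace.single k (1:ℝ) + gradient (ω k) y,
            EuclideanSpace.single j (1:ℝ)⟫ := rfl
  -- Step B : quadratic form = ∫ μ ⟪v, v⟫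
  have hB : ∑ j, ∑ k, μeff j k * ζ j * ζ k = ∫ y in Y, μ y * ⟪v y, v y⟫ := by
    have hIjk : ∀ j k : Fin d,
        IntegrableOn (fun y => (ζ j * ζ k) * (μ y * ⟪w k y, w j y⟫)) Y volume :=
      fun j k => (hIntmul _ (hwic k j)).const_mul _
    have h1 : ∀ j k : Fin d, μeff j k * ζ j * ζ k
        = ∫ y in Y, (ζ j * ζ k) * (μ y * ⟪w k y, w j y⟫) := by
      intro j k
      rw [integral_const_mul, ← hA j k]; ring
    have h3 : ∀ y, (∑ j, ∑ k, (ζ j * ζ k) * (μ y * ⟪w k y, w j y⟫))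
        = μ y * ⟪v y, v y⟫ := by
      intro y
      simp only [hv, sum_inner, inner_sum, real_inner_smul_left, real_inner_smul_right,
        Finset.mul_sum]
      rw [Finset.sum_comm]
      refine Finset.sum_congr rfl fun j _ => Finset.sum_congr rfl fun k _ => ?_
      rw [real_inner_comm (w j y) (w k y)]; ring
    calc ∑ j, ∑ k, μeff j k * ζ j * ζ k
        = ∑ j, ∑ k, ∫ y in Y, (ζ j * ζ k) * (μ y * ⟪w k y, w j y⟫) := by
          exact Finset.sum_congr rfl fun j _ => Finset.sum_congr rfl fun k _ => h1 j k
      _ = ∑ j, ∫ y in Y, ∑ k, (ζ j * ζ k) * (μ y * ⟪w k y, w j y⟫) := by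
          exact Finset.sum_congr rfl fun j _ =>
            (integral_finset_sum _ fun k _ => hIjk j k).symm
      _ = ∫ y in Y, ∑ j, ∑ k, (ζ j * ζ k) * (μ y * ⟪w k y, w j y⟫) := by
          refine (integral_finset_sum _ fun j _ => ?_).symm
          exact integrable_finset_sum _ fun k _ => hIjk j k
      _ = ∫ y in Y, μ y * ⟪v y, v y⟫ := by simp_rw [h3]
  -- Step C : lower bound by Λ⁻¹ ∫ ⟪v,v⟫
  have hvvc : Continuous fun y => ⟪v y, v y⟫ := hvc.inner hvc
  have hC : Λ⁻¹ * ∫ y in Y, ⟪v y, v y⟫ ≤ ∫ y in Y, μ y * ⟪v y, v y⟫ := by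
    rw [← integral_const_mul]
    refine setIntegral_mono_on (by exact (hInt _ hvvc).const_mul _) (hIntmul _ hvvc) hmeas ?_
    intro y _
    exact mul_le_mul_of_nonneg_right (hμbound y).1 real_inner_self_nonneg
  -- Step D : ∫ ⟪v,v⟫ ≥ ‖ζ‖²
  have hvic : ∀ i, Continuous fun y => v y i := fun i =>
    (EuclideanSpace.proj i : EuclideanSpace ℝ (Fin d) →L[ℝ] ℝ).continuous.comp hvc
  have hD : ‖ζ‖^2 ≤ ∫ y in Y, ⟪v y, v y⟫ := by
    obtain ⟨n, rfl⟩ : ∃ n, d = n + 1 := by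
      rcases hd with rfl | rfl
      exacts [⟨1, rfl⟩, ⟨2, rfl⟩]
    have hgradint : ∀ (k : Fin (n+1)) (i : Fin (n+1)),
        ∫ y in Y, gradient (ω k) y i = 0 := by
      intro k i
      have h0 := effperm_aux_fderiv_int n (ω k) (hωC1 k) (hωper k) i
      calc ∫ y in Y, gradient (ω k) y i
          = ∫ y in Y, fderiv ℝ (ω k) y (EuclideanSpace.single i 1) :=
            setIntegral_congr_fun hmeas fun y _ => effperm_aux_grad_comp _ (ω k) y i
        _ = 0 := by rw [hY]; exact h0
    have hvint : ∀ i, ∫ y in Y, v y i = ζ i := by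
      intro i
      have happ : ∀ y, v y i = ∑ k, ζ k * ((EuclideanSpace.single k (1:ℝ)) i
          + gradient (ω k) y i) := by
        intro y
        have : v y i = (EuclideanSpace.proj i : EuclideanSpace ℝ (Fin (n+1)) →L[ℝ] ℝ)
            (∑ k, ζ k • w k y) := rfl
        rw [this, map_sum]
        refine Finset.sum_congr rfl fun k _ => ?_
        rw [_root_.map_smul]
        have : (EuclideanSpace.proj i : EuclideanSpace ℝ (Fin (n+1)) →L[ℝ] ℝ) (w k y)
            = (EuclideanSpace.single k (1:ℝ)) i + gradient (ω k) y i := by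
          have hwk : w k y = EuclideanSpace.single k (1:ℝ) + gradient (ω k) y := rfl
          rw [hwk, _root_.map_add]
          rfl
        rw [this]
        rfl
      have hIg : ∀ k : Fin (n+1), IntegrableOn (fun y => gradient (ω k) y i) Y volume :=
        fun k => hInt _ ((EuclideanSpace.proj i :
          EuclideanSpace ℝ (Fin (n+1)) →L[ℝ] ℝ).continuous.comp
          (effperm_aux_grad_cont _ (ω k) (hωC1 k)))
      have hIterm : ∀ k : Fin (n+1), IntegrableOn
          (fun y => ζ k * ((EuclideanSpace.single k (1:ℝ)) i + gradient (ω k) y i))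
          Y volume := by
        intro k
        refine Integrable.const_mul ?_ _
        exact (integrableOn_const (by rw [hvol]; exact ENNReal.one_ne_top)).add
          (hIg k)
      calc ∫ y in Y, v y i
          = ∫ y in Y, ∑ k, ζ k * ((EuclideanSpace.single k (1:ℝ)) i
              + gradient (ω k) y i) := by simp_rw [happ]
        _ = ∑ k, ∫ y in Y, ζ k * ((EuclideanSpace.single k (1:ℝ)) i
              + gradient (ω k) y i) := integral_finset_sum _ fun k _ => hIterm k
        _ = ∑ k, ζ k * ((EuclideanSpace.single k (1:ℝ)) i) := by
            refine Finset.sum_congr rfl fun k _ => ?_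
            rw [integral_const_mul, integral_add (show IntegrableOn (fun _ => (EuclideanSpace.single k (1:ℝ)) i) Y volume
              from integrableOn_const (by rw [hvol]; exact ENNReal.one_ne_top)) (hIg k),
              hgradint k i, setIntegral_const, measureReal_def, hvol]
            simp
        _ = ζ i := by
            simp [EuclideanSpace.single_apply]
    have hinner : ∀ y, ⟪v y, v y⟫ = ∑ i, v y i * v y i := by
      intro y
      simp only [PiLp.inner_apply, RCLike.inner_apply, conj_trivial]
    have hIvv : ∀ i : Fin (n+1), IntegrableOn (fun y => v y i * v y i) Y volume :=
      fun i => hInt _ ((hvic i).mul (hvic i))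
    have hnorm : ‖ζ‖^2 = ∑ i, ζ i * ζ i := by
      rw [EuclideanSpace.norm_eq, Real.sq_sqrt (by positivity)]
      exact Finset.sum_congr rfl fun i _ => by
        rw [Real.norm_eq_abs, sq_abs]; ring
    calc ‖ζ‖^2 = ∑ i, ζ i * ζ i := hnorm
      _ ≤ ∑ i, ∫ y in Y, v y i * v y i := by
          refine Finset.sum_le_sum fun i _ => ?_
          have hj := effperm_aux_jensen (n+1) hd1 (fun y => v y i) (hvic i)
          rw [← hY] at hj
          rw [hvint i] at hj
          calc ζ i * ζ i = (ζ i)^2 := by ring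
            _ ≤ ∫ y in Y, (v y i)^2 := hj
            _ = ∫ y in Y, v y i * v y i := by simp_rw [sq]
      _ = ∫ y in Y, ∑ i, v y i * v y i := (integral_finset_sum _ fun i _ => hIvv i).symm
      _ = ∫ y in Y, ⟪v y, v y⟫ := by simp_rw [hinner]
  calc Λ⁻¹ * ‖ζ‖ ^ 2 ≤ Λ⁻¹ * ∫ y in Y, ⟪v y, v y⟫ :=
        mul_le_mul_of_nonneg_left hD (by positivity)
    _ ≤ ∫ y in Y, μ y * ⟪v y, v y⟫ := hC
    _ = ∑ j, ∑ k, μeff j k * ζ j * ζ k := hB.symm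
end

section
/- Under the stated cell-problem orthogonality hypotheses, the biquadratic form of the effective viscosity tensor has the nonnegative integral representation: for all ζ, η ∈ ℝ^d, Υ(ζ,η) := Σ_{i,j,m,n} N^{ij}_{mn} ζ_i ζ_m η_j η_n = ∫_Y ‖Σ_{i,j} ζ_i η_j D(P^{ij} − χ^{ij})(y)‖_F² dy ≥ 0, where ‖·‖_F is the Frobenius norm. -/
open MeasureTheory Finset

noncomputable section

/-- The symmetrized gradient `D(v) = (∇v + ∇vᵀ)/2` of a vector field `v : ℝ^d → ℝ^d`. -/
def symGrad {d : ℕ} (v : EuclideanSpace ℝ (Fin d) → EuclideanSpace ℝ (Fin d))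
    (y : EuclideanSpace ℝ (Fin d)) : Matrix (Fin d) (Fin d) ℝ :=
  fun m n =>
    (fderiv ℝ v y (EuclideanSpace.single m 1) n + fderiv ℝ v y (EuclideanSpace.single n 1) m) / 2

/-- The Frobenius inner product `A : B` of two `d × d` matrices. -/
def frob {d : ℕ} (A B : Matrix (Fin d) (Fin d) ℝ) : ℝ := ∑ m, ∑ n, A m n * B m n

/-- The field `P^{ij}` given by `(P^{ij}(y))_k = y_j δ_{ik}`. -/
def Pfield {d : ℕ} (i j : Fin d) (y : EuclideanSpace ℝ (Fin d)) : EuclideanSpace ℝ (Fin d) :=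
  EuclideanSpace.single i (y j)

-- Pfield as a CLM
def PfieldCLM {d : ℕ} (i j : Fin d) : EuclideanSpace ℝ (Fin d) →L[ℝ] EuclideanSpace ℝ (Fin d) :=
  (EuclideanSpace.proj j).smulRight (EuclideanSpace.single i (1:ℝ))

lemma Pfield_eq {d : ℕ} (i j : Fin d) : Pfield i j = fun z => PfieldCLM i j z := by
  funext z
  ext k
  simp [Pfield, PfieldCLM, EuclideanSpace.single_apply]


def Qval {d : ℕ} (i j m n : Fin d) : ℝ :=
  ((if m = i then (1:ℝ) else 0) * (if n = j then 1 else 0)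
   + (if n = i then (1:ℝ) else 0) * (if m = j then 1 else 0)) / 2

lemma fderiv_Pfield {d : ℕ} (i j : Fin d) (y v : EuclideanSpace ℝ (Fin d)) :
    fderiv ℝ (Pfield i j) y v = EuclideanSpace.single i (v j) := by
  rw [Pfield_eq, (PfieldCLM i j).fderiv]
  ext k
  simp [PfieldCLM, EuclideanSpace.single_apply]

lemma symGrad_sub {d : ℕ} (i j : Fin d) (χ : EuclideanSpace ℝ (Fin d) → EuclideanSpace ℝ (Fin d))
    (hχ : ContDiff ℝ 1 χ) (y : EuclideanSpace ℝ (Fin d)) (m n : Fin d) :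
    symGrad (fun z => Pfield i j z - χ z) y m n = Qval i j m n - symGrad χ y m n := by
  have h1 : DifferentiableAt ℝ (Pfield i j) y := by
    rw [Pfield_eq]; exact (PfieldCLM i j).differentiableAt
  have h2 : DifferentiableAt ℝ χ y := (hχ.differentiable one_ne_zero) y
  have hsub : fderiv ℝ (fun z => Pfield i j z - χ z) y = fderiv ℝ (Pfield i j) y - fderiv ℝ χ y :=
    fderiv_sub h1 h2
  simp only [symGrad, hsub, ContinuousLinearMap.sub_apply, PiLp.sub_apply, fderiv_Pfield,
    EuclideanSpace.single_apply, Qval]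
  clear hsub h1 h2 hχ
  split_ifs <;> subst_vars <;> first | ring1 | tauto

lemma symGrad_symm {d : ℕ} (v : EuclideanSpace ℝ (Fin d) → EuclideanSpace ℝ (Fin d))
    (y : EuclideanSpace ℝ (Fin d)) (m n : Fin d) : symGrad v y m n = symGrad v y n m := by
  simp [symGrad]; ring

lemma frob_Qval {d : ℕ} (A : Matrix (Fin d) (Fin d) ℝ) (hA : ∀ m n, A m n = A n m)
    (i j : Fin d) : frob A (fun m n => Qval i j m n) = A i j := by
  have key : ∀ x x1 : Fin d, A x x1 * Qval i j x x1 =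
      ((if x = i then (if x1 = j then A x x1 else 0) else 0)
        + (if x = j then (if x1 = i then A x x1 else 0) else 0)) / 2 := by
    intro x x1; simp only [Qval]; split_ifs <;> ring
  simp only [frob, key, Finset.sum_add_distrib, ← Finset.sum_div, Finset.sum_ite_irrel,
    Finset.sum_const_zero, Finset.sum_ite_eq',
    Finset.mem_univ, if_true]
  rw [hA j i]
  ring

lemma contDiff_PsubChi {d : ℕ} (i j : Fin d)
    (χ : EuclideanSpace ℝ (Fin d) → EuclideanSpace ℝ (Fin d)) (hχ : ContDiff ℝ 1 χ) :
    ContDiff ℝ 1 (fun z => Pfield i j z - χ z) := by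
  rw [Pfield_eq]
  exact (PfieldCLM i j).contDiff.sub hχ

lemma continuous_symGrad_entry {d : ℕ}
    (v : EuclideanSpace ℝ (Fin d) → EuclideanSpace ℝ (Fin d)) (hv : ContDiff ℝ 1 v)
    (m n : Fin d) : Continuous fun y => symGrad v y m n := by
  have h : Continuous fun y => fderiv ℝ v y := hv.continuous_fderiv one_ne_zero
  have h1 : ∀ a b : Fin d, Continuous fun y => fderiv ℝ v y (EuclideanSpace.single a 1) b := by
    intro a b
    exact (EuclideanSpace.proj b).continuous.comp
      (((ContinuousLinearMap.apply ℝ _ (EuclideanSpace.single a (1:ℝ))).continuous).comp h)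
  exact ((h1 m n).add (h1 n m)).div_const 2

lemma Y_subset_ball {d : ℕ} (y : EuclideanSpace ℝ (Fin d))
    (hy : ∀ i, y i ∈ Set.Ioo (0:ℝ) 1) : y ∈ Metric.closedBall (0 : EuclideanSpace ℝ (Fin d)) (d + 1) := by
  rw [Metric.mem_closedBall, dist_zero_right, EuclideanSpace.norm_eq]
  have h1 : ∑ i, ‖y i‖ ^ 2 ≤ (d : ℝ) := by
    calc ∑ i, ‖y i‖ ^ 2 ≤ ∑ _i : Fin d, (1:ℝ) := by
          apply Finset.sum_le_sum
          intro i _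
          have := (hy i).1
          have := (hy i).2
          rw [Real.norm_eq_abs, abs_of_pos (hy i).1]
          nlinarith
      _ = d := by simp
  have h2 : Real.sqrt (∑ i, ‖y i‖ ^ 2) ≤ Real.sqrt (((d:ℝ) + 1) ^ 2) :=
    Real.sqrt_le_sqrt (by nlinarith)
  rwa [Real.sqrt_sq (by positivity)] at h2

lemma frob_sum_left {d : ℕ} {ι : Type*} (s : Finset ι) (A : ι → Matrix (Fin d) (Fin d) ℝ)
    (B : Matrix (Fin d) (Fin d) ℝ) : frob (∑ i ∈ s, A i) B = ∑ i ∈ s, frob (A i) B := by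
  simp only [frob, Matrix.sum_apply, Finset.sum_mul]
  exact Eq.trans (Finset.sum_congr rfl fun m _ => Finset.sum_comm) Finset.sum_comm

lemma frob_sum_right {d : ℕ} {ι : Type*} (s : Finset ι) (A : Matrix (Fin d) (Fin d) ℝ)
    (B : ι → Matrix (Fin d) (Fin d) ℝ) : frob A (∑ i ∈ s, B i) = ∑ i ∈ s, frob A (B i) := by
  simp only [frob, Matrix.sum_apply, Finset.mul_sum]
  exact Eq.trans (Finset.sum_congr rfl fun m _ => Finset.sum_comm) Finset.sum_comm

lemma frob_smul_left {d : ℕ} (c : ℝ) (A B : Matrix (Fin d) (Fin d) ℝ) :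
    frob (c • A) B = c * frob A B := by
  simp only [frob, Matrix.smul_apply, smul_eq_mul, Finset.mul_sum, mul_assoc]

lemma frob_smul_right {d : ℕ} (c : ℝ) (A B : Matrix (Fin d) (Fin d) ℝ) :
    frob A (c • B) = c * frob A B := by
  simp only [frob, Matrix.smul_apply, smul_eq_mul, Finset.mul_sum]
  congr 1; ext m; congr 1; ext n; ring

lemma frob_sub_right {d : ℕ} (A B C : Matrix (Fin d) (Fin d) ℝ) :
    frob A (fun m n => B m n - C m n) = frob A B - frob A C := by
  simp only [frob, mul_sub, Finset.sum_sub_distrib]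

lemma frob_self_nonneg {d : ℕ} (A : Matrix (Fin d) (Fin d) ℝ) : 0 ≤ frob A A := by
  apply Finset.sum_nonneg; intro m _
  apply Finset.sum_nonneg; intro n _
  exact mul_self_nonneg _

lemma integrableOn_Y {d : ℕ} (f : EuclideanSpace ℝ (Fin d) → ℝ) (hf : Continuous f) :
    IntegrableOn f {y : EuclideanSpace ℝ (Fin d) | ∀ i, y i ∈ Set.Ioo (0:ℝ) 1} := by
  have hK : IsCompact (Metric.closedBall (0 : EuclideanSpace ℝ (Fin d)) (d + 1)) :=
    isCompact_closedBall _ _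
  exact (hf.continuousOn.integrableOn_compact hK).mono_set fun y hy => Y_subset_ball y hy

lemma measurableSet_Y {d : ℕ} :
    MeasurableSet {y : EuclideanSpace ℝ (Fin d) | ∀ i, y i ∈ Set.Ioo (0:ℝ) 1} := by
  have h : {y : EuclideanSpace ℝ (Fin d) | ∀ i, y i ∈ Set.Ioo (0:ℝ) 1}
      = ⋂ i, (fun y : EuclideanSpace ℝ (Fin d) => y i) ⁻¹' (Set.Ioo (0:ℝ) 1) := by
    ext y; simp
  rw [h]
  exact MeasurableSet.iInter fun i =>
    (isOpen_Ioo.preimage (EuclideanSpace.proj i).continuous).measurableSet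

lemma frob_comm {d : ℕ} (A B : Matrix (Fin d) (Fin d) ℝ) : frob A B = frob B A := by
  unfold frob
  refine Finset.sum_congr rfl fun m _ => Finset.sum_congr rfl fun n _ => mul_comm _ _

/-- Under the cell-problem orthogonality hypotheses, the biquadratic form of
the effective viscosity tensor has the nonnegative integral representation
`Υ(ζ,η) = Σ N^{ij}_{mn} ζ_i ζ_m η_j η_n = ∫_Y ‖Σ_{i,j} ζ_i η_j D(P^{ij} − χ^{ij})(y)‖_F² dy ≥ 0`. -/
theorem effective_viscosity_biquadratic_representation
    (d : ℕ) (hd : d = 2 ∨ d = 3)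
    (Y : Set (EuclideanSpace ℝ (Fin d)))
    (hY : Y = {y : EuclideanSpace ℝ (Fin d) | ∀ i, y i ∈ Set.Ioo (0 : ℝ) 1})
    (χ : Fin d → Fin d → EuclideanSpace ℝ (Fin d) → EuclideanSpace ℝ (Fin d))
    (hχC1 : ∀ i j, ContDiff ℝ 1 (χ i j))
    (hχper : ∀ (i j : Fin d) (y : EuclideanSpace ℝ (Fin d)) (l : Fin d),
      χ i j (y + EuclideanSpace.single l 1) = χ i j y)
    (hcell : ∀ i j m n : Fin d,
      ∫ y in Y, frob (symGrad (fun z => Pfield i j z - χ i j z) y) (symGrad (χ m n) y) = 0)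
    (N : Fin d → Fin d → Fin d → Fin d → ℝ)
    (hN : ∀ i j m n : Fin d,
      N i j m n = ∫ y in Y, symGrad (fun z => Pfield i j z - χ i j z) y m n) :
    ∀ ζ η : EuclideanSpace ℝ (Fin d),
      (∑ i, ∑ j, ∑ m, ∑ n, N i j m n * ζ i * ζ m * η j * η n =
        ∫ y in Y,
          frob (∑ i, ∑ j, (ζ i * η j) • symGrad (fun z => Pfield i j z - χ i j z) y)
            (∑ i, ∑ j, (ζ i * η j) • symGrad (fun z => Pfield i j z - χ i j z) y)) ∧
      0 ≤ ∑ i, ∑ j, ∑ m, ∑ n, N i j m n * ζ i * ζ m * η j * η n := by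
  intro ζ η
  set F : Fin d → Fin d → EuclideanSpace ℝ (Fin d) → Matrix (Fin d) (Fin d) ℝ :=
    fun i j y => symGrad (fun z => Pfield i j z - χ i j z) y with hF
  have hFc : ∀ i j m n : Fin d, Continuous fun y => F i j y m n := fun i j m n =>
    continuous_symGrad_entry _ (contDiff_PsubChi i j (χ i j) (hχC1 i j)) m n
  have hχc : ∀ i j m n : Fin d, Continuous fun y => symGrad (χ i j) y m n := fun i j m n =>
    continuous_symGrad_entry _ (hχC1 i j) m n
  have hcont1 : ∀ i j m n : Fin d, Continuous fun y => frob (F i j y) (F m n y) := by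
    intro i j m n
    simp only [frob]
    apply continuous_finset_sum; intro a _
    apply continuous_finset_sum; intro b _
    exact (hFc i j a b).mul (hFc m n a b)
  have hcont2 : ∀ i j m n : Fin d, Continuous fun y => frob (F i j y) (symGrad (χ m n) y) := by
    intro i j m n
    simp only [frob]
    apply continuous_finset_sum; intro a _
    apply continuous_finset_sum; intro b _
    exact (hFc i j a b).mul (hχc m n a b)
  have hint1 : ∀ i j m n : Fin d,
      Integrable (fun y => frob (F i j y) (F m n y)) (volume.restrict Y) := by
    intro i j m n; rw [hY]; exact integrableOn_Y _ (hcont1 i j m n)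
  have hint2 : ∀ i j m n : Fin d,
      Integrable (fun y => frob (F i j y) (symGrad (χ m n) y)) (volume.restrict Y) := by
    intro i j m n; rw [hY]; exact integrableOn_Y _ (hcont2 i j m n)
  have hint3 : ∀ i j m n : Fin d,
      Integrable (fun y => F i j y m n) (volume.restrict Y) := by
    intro i j m n; rw [hY]; exact integrableOn_Y _ (hFc i j m n)
  have hkey : ∀ i j m n : Fin d, (∫ y in Y, frob (F i j y) (F m n y)) = N i j m n := by
    intro i j m n
    have hdec : ∀ y, frob (F i j y) (F m n y)
        = F i j y m n - frob (F i j y) (symGrad (χ m n) y) := by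
      intro y
      have h1 : F m n y = fun a b => Qval m n a b - symGrad (χ m n) y a b := by
        funext a b; exact symGrad_sub m n (χ m n) (hχC1 m n) y a b
      calc frob (F i j y) (F m n y)
          = frob (F i j y) (fun a b => Qval m n a b)
            - frob (F i j y) (symGrad (χ m n) y) := by
            rw [h1]; exact frob_sub_right _ _ _
        _ = F i j y m n - frob (F i j y) (symGrad (χ m n) y) := by
            rw [frob_Qval _ (fun a b => symGrad_symm _ y a b) m n]
    calc (∫ y in Y, frob (F i j y) (F m n y))
        = ∫ y in Y, (F i j y m n - frob (F i j y) (symGrad (χ m n) y)) := by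
          simp only [hdec]
      _ = (∫ y in Y, F i j y m n) - ∫ y in Y, frob (F i j y) (symGrad (χ m n) y) :=
          integral_sub (hint3 i j m n) (hint2 i j m n)
      _ = N i j m n := by rw [hcell i j m n, hN i j m n, sub_zero]
  have hexp : ∀ y, frob (∑ i, ∑ j, (ζ i * η j) • F i j y) (∑ i, ∑ j, (ζ i * η j) • F i j y)
      = ∑ i, ∑ j, (ζ i * η j) * (∑ m, ∑ n, (ζ m * η n) * frob (F i j y) (F m n y)) := by
    intro y
    simp only [frob_sum_left, frob_sum_right, frob_smul_left, frob_smul_right]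
    refine Finset.sum_congr rfl fun a _ => Finset.sum_congr rfl fun b _ => ?_
    congr 1
    refine Finset.sum_congr rfl fun p _ => Finset.sum_congr rfl fun q _ => ?_
    congr 1
    exact frob_comm _ _
  have hinner : ∀ i j : Fin d,
      (∫ y in Y, ∑ m, ∑ n, (ζ m * η n) * frob (F i j y) (F m n y))
        = ∑ m, ∑ n, (ζ m * η n) * N i j m n := by
    intro i j
    rw [integral_finset_sum _ (fun m _ => integrable_finset_sum _
      fun n _ => (hint1 i j m n).const_mul _)]
    refine Finset.sum_congr rfl fun m _ => ?_
    rw [integral_finset_sum _ (fun n _ => (hint1 i j m n).const_mul _)]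
    refine Finset.sum_congr rfl fun n _ => ?_
    rw [integral_const_mul, hkey i j m n]
  have hmain : ∑ i, ∑ j, ∑ m, ∑ n, N i j m n * ζ i * ζ m * η j * η n
      = ∫ y in Y, frob (∑ i, ∑ j, (ζ i * η j) • F i j y)
          (∑ i, ∑ j, (ζ i * η j) • F i j y) := by
    have hintA : ∀ i j : Fin d, Integrable
        (fun y => (ζ i * η j) * (∑ m, ∑ n, (ζ m * η n) * frob (F i j y) (F m n y)))
        (volume.restrict Y) := by
      intro i j
      exact (integrable_finset_sum _ fun m _ => integrable_finset_sum _
        fun n _ => (hint1 i j m n).const_mul _).const_mul _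
    calc ∑ i, ∑ j, ∑ m, ∑ n, N i j m n * ζ i * ζ m * η j * η n
        = ∑ i, ∑ j, (ζ i * η j) * (∑ m, ∑ n, (ζ m * η n) * N i j m n) := by
          simp only [Finset.mul_sum]
          refine Finset.sum_congr rfl fun i _ => Finset.sum_congr rfl fun j _ =>
            Finset.sum_congr rfl fun m _ => Finset.sum_congr rfl fun n _ => ?_
          ring
      _ = ∑ i, ∑ j, (ζ i * η j)
            * (∫ y in Y, ∑ m, ∑ n, (ζ m * η n) * frob (F i j y) (F m n y)) := by
          refine Finset.sum_congr rfl fun i _ => Finset.sum_congr rfl fun j _ => ?_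
          rw [hinner i j]
      _ = ∑ i, ∑ j, ∫ y in Y,
            (ζ i * η j) * (∑ m, ∑ n, (ζ m * η n) * frob (F i j y) (F m n y)) := by
          refine Finset.sum_congr rfl fun i _ => Finset.sum_congr rfl fun j _ => ?_
          exact (integral_const_mul _ _).symm
      _ = ∫ y in Y, ∑ i, ∑ j,
            (ζ i * η j) * (∑ m, ∑ n, (ζ m * η n) * frob (F i j y) (F m n y)) := by
          rw [integral_finset_sum _ (fun i _ => integrable_finset_sum _ fun j _ => hintA i j)]
          exact Finset.sum_congr rfl fun i _ =>
            (integral_finset_sum _ (fun j _ => hintA i j)).symm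
      _ = ∫ y in Y, frob (∑ i, ∑ j, (ζ i * η j) • F i j y)
            (∑ i, ∑ j, (ζ i * η j) • F i j y) := by
          simp only [hexp]
  refine ⟨hmain, ?_⟩
  rw [hmain]
  apply setIntegral_nonneg
  · rw [hY]; exact measurableSet_Y
  · intro y _
    exact frob_self_nonneg _
end
end
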